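/- arXiv:1704.07764 — 5 statements merged into one kernel-verified Lean document; each statement's English description precedes it below -/
import Mathlib

section
/- For every integer n ≥ 1, the set Pₙ of nonzero n-th powers in ℚ_p (i.e., {x ∈ ℚ_p : x ≠ 0 and x = yⁿ for some y ∈ ℚ_p}) is a subgroup of the multiplicative group ℚ_pˣ which is open as a subset of ℚ_p and has finite index in ℚ_pˣ. -/
open Polynomial Metric

private lemma padic_pow_of_close (p : ℕ) [Fact p.Prime] (n : ℕ) (a : ℤ_[p])
    (ha : ‖a - 1‖ < ‖(n : ℤ_[p])‖ ^ 2) : ∃ b : ℤ_[p], b ^ n = a := by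
  have hnorm : ‖(X ^ n - C a : ℤ_[p][X]).eval 1‖ <
      ‖((X ^ n - C a : ℤ_[p][X]).derivative).eval 1‖ ^ 2 := by
    have h1 : (X ^ n - C a : ℤ_[p][X]).eval 1 = 1 - a := by simp
    have h2 : ((X ^ n - C a : ℤ_[p][X]).derivative).eval 1 = (n : ℤ_[p]) := by
      simp [derivative_X_pow]
    rw [h1, h2, norm_sub_rev]
    exact ha
  obtain ⟨z, hz, -⟩ := hensels_lemma hnorm
  refine ⟨z, ?_⟩
  have hz' : z ^ n - a = 0 := by simpa using hz
  exact sub_eq_zero.mp hz'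

/-- For every integer `n ≥ 1`, the set of nonzero `n`-th powers in `ℚ_p` forms a subgroup of
`ℚ_pˣ` which is open as a subset of `ℚ_p` and has finite index in `ℚ_pˣ`. -/
theorem nth_powers_open_finite_index_subgroup (p : ℕ) [Fact p.Prime] (n : ℕ) (hn : 1 ≤ n) :
    ∃ H : Subgroup ℚ_[p]ˣ,
      (∀ x : ℚ_[p]ˣ, x ∈ H ↔ ∃ y : ℚ_[p], (x : ℚ_[p]) = y ^ n) ∧
      IsOpen {x : ℚ_[p] | x ≠ 0 ∧ ∃ y : ℚ_[p], x = y ^ n} ∧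
      H.FiniteIndex := by
  have hn0 : n ≠ 0 := by omega
  have hnp : ((n : ℚ_[p])) ≠ 0 := Nat.cast_ne_zero.mpr hn0
  have hnn : 0 < ‖(n : ℚ_[p])‖ := norm_pos_iff.mpr hnp
  have hn1 : ‖(n : ℚ_[p])‖ ≤ 1 := by
    have := Padic.norm_int_le_one (p := p) (n : ℤ)
    simpa using this
  -- openness of the set of nonzero n-th powers
  have hP : IsOpen {x : ℚ_[p] | x ≠ 0 ∧ ∃ y : ℚ_[p], x = y ^ n} := by
    rw [Metric.isOpen_iff]
    rintro x ⟨hx0, y, rfl⟩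
    have hxn : (0:ℝ) < ‖y ^ n‖ := norm_pos_iff.mpr hx0
    refine ⟨‖(n : ℚ_[p])‖ ^ 2 * ‖y ^ n‖, mul_pos (pow_pos hnn 2) hxn, ?_⟩
    intro z hz
    rw [mem_ball, dist_eq_norm] at hz
    have hsq : ‖(n : ℚ_[p])‖ ^ 2 ≤ 1 := by nlinarith
    have hle : ‖(n : ℚ_[p])‖ ^ 2 * ‖y ^ n‖ ≤ ‖y ^ n‖ := by nlinarith
    have hlt1 : ‖z - y ^ n‖ < ‖y ^ n‖ := lt_of_lt_of_le hz hle
    have hz0 : z ≠ 0 := by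
      rintro rfl
      rw [zero_sub, norm_neg] at hlt1
      exact lt_irrefl _ hlt1
    set a : ℚ_[p] := z / (y ^ n) with ha_def
    have ha1 : ‖a - 1‖ < ‖(n : ℚ_[p])‖ ^ 2 := by
      have hrw : a - 1 = (z - y ^ n) / (y ^ n) := by
        rw [ha_def, sub_div, div_self hx0]
      rw [hrw, norm_div, div_lt_iff₀ hxn]
      exact hz
    have ha : ‖a‖ ≤ 1 := by
      have : ‖a - 1 + 1‖ ≤ max ‖a - 1‖ ‖(1:ℚ_[p])‖ := Padic.nonarchimedean _ _
      have h1 : ‖a - 1‖ ≤ 1 := le_of_lt (lt_of_lt_of_le ha1 (by nlinarith))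
      simpa [max_le_iff, h1] using this
    obtain ⟨b, hb⟩ := padic_pow_of_close p n ⟨a, ha⟩ (by
      rw [PadicInt.norm_def, PadicInt.norm_def]
      push_cast
      exact ha1)
    refine ⟨hz0, y * (b : ℚ_[p]), ?_⟩
    have hb' : (b : ℚ_[p]) ^ n = a := by
      exact_mod_cast congrArg (fun t : ℤ_[p] => (t : ℚ_[p])) hb
    rw [mul_pow, hb', ha_def]
    field_simp
  -- the subgroup
  refine ⟨(powMonoidHom n : ℚ_[p]ˣ →* ℚ_[p]ˣ).range, ?_, hP, ?_⟩
  · intro x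
    constructor
    · rintro ⟨u, rfl⟩
      exact ⟨u, by simp [powMonoidHom_apply]⟩
    · rintro ⟨y, hy⟩
      have hy0 : y ≠ 0 := by
        rintro rfl
        exact x.ne_zero (by simp [hy, zero_pow hn0])
      exact ⟨Units.mk0 y hy0, Units.ext (by simp [powMonoidHom_apply, hy])⟩
  · -- finite index
    set H : Subgroup ℚ_[p]ˣ := (powMonoidHom n : ℚ_[p]ˣ →* ℚ_[p]ˣ).range with hH
    have hmemP : ∀ u : ℚ_[p]ˣ, u ∈ H ↔
        (u : ℚ_[p]) ∈ {x : ℚ_[p] | x ≠ 0 ∧ ∃ y : ℚ_[p], x = y ^ n} := by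
      intro u
      constructor
      · rintro ⟨v, rfl⟩
        exact ⟨Units.ne_zero _, v, by simp [powMonoidHom_apply]⟩
      · rintro ⟨-, y, hy⟩
        have hy0 : y ≠ 0 := fun h => u.ne_zero (by simp [hy, h, zero_pow hn0])
        exact ⟨Units.mk0 y hy0, Units.ext (by simp [powMonoidHom_apply, hy])⟩
    have hHopen : IsOpen (H : Set ℚ_[p]ˣ) := by
      have heq : (H : Set ℚ_[p]ˣ) =
          Units.val ⁻¹' {x : ℚ_[p] | x ≠ 0 ∧ ∃ y : ℚ_[p], x = y ^ n} := by
        ext u; exact hmemP u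
      rw [heq]
      exact hP.preimage Units.continuous_val
    have hdisc : DiscreteTopology (ℚ_[p]ˣ ⧸ H) := QuotientGroup.discreteTopology hHopen
    have hppos : 0 < (p : ℝ) := by exact_mod_cast (Fact.out : p.Prime).pos
    have hp0 : (p : ℚ_[p]) ≠ 0 := Nat.cast_ne_zero.mpr (Fact.out : p.Prime).ne_zero
    set π : ℚ_[p]ˣ := Units.mk0 (p : ℚ_[p]) hp0 with hπdef
    have hsph : ∀ w : Metric.sphere (0 : ℚ_[p]) 1, (w : ℚ_[p]) ≠ 0 := by
      intro w
      have hw : ‖(w : ℚ_[p])‖ = 1 := by simpa using mem_sphere_zero_iff_norm.mp w.2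
      intro h
      rw [h] at hw
      simp at hw
    set f : Metric.sphere (0 : ℚ_[p]) 1 × Fin n → ℚ_[p]ˣ ⧸ H :=
      fun w => QuotientGroup.mk (Units.mk0 (w.1 : ℚ_[p]) (hsph w.1) * π ^ (w.2 : ℕ)) with hf
    have hfc : Continuous f := by
      refine Continuous.comp continuous_quot_mk ?_
      rw [Units.isEmbedding_val₀.continuous_iff]
      have heq : (Units.val ∘ fun w : Metric.sphere (0 : ℚ_[p]) 1 × Fin n =>
          Units.mk0 (w.1 : ℚ_[p]) (hsph w.1) * π ^ (w.2 : ℕ)) =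
          fun w => (w.1 : ℚ_[p]) * (p : ℚ_[p]) ^ (w.2 : ℕ) := rfl
      rw [heq]
      exact (continuous_subtype_val.comp continuous_fst).mul
        ((continuous_of_discreteTopology
          (f := fun i : Fin n => (p : ℚ_[p]) ^ (i : ℕ))).comp continuous_snd)
    have hfsurj : Function.Surjective f := by
      intro c
      refine QuotientGroup.induction_on c ?_
      intro x
      set v : ℤ := (x : ℚ_[p]).valuation with hv
      have hxnorm : ‖(x : ℚ_[p])‖ = (p : ℝ) ^ (-v) := Padic.norm_eq_zpow_neg_valuation x.ne_zero
      set u : ℚ_[p]ˣ := x * π ^ (-v) with hu_def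
      have hπn : ‖((π ^ (-v) : ℚ_[p]ˣ) : ℚ_[p])‖ = (p : ℝ) ^ v := by
        rw [Units.val_zpow_eq_zpow_val, norm_zpow]
        simp only [hπdef, Units.val_mk0, Padic.norm_p]
        rw [inv_zpow, ← zpow_neg, neg_neg]
      have hu : ‖(u : ℚ_[p])‖ = 1 := by
        rw [hu_def, Units.val_mul, norm_mul, hxnorm, hπn,
          ← zpow_add₀ (ne_of_gt hppos), neg_add_cancel, zpow_zero]
      have h0 : 0 ≤ v % (n : ℤ) := Int.emod_nonneg v (by exact_mod_cast hn0)
      have h1 : v % (n : ℤ) < n :=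
        Int.emod_lt_of_pos v (by exact_mod_cast Nat.pos_of_ne_zero hn0)
      set i : ℕ := (v % (n : ℤ)).toNat with hi_def
      have hi' : (i : ℤ) = v % n := Int.toNat_of_nonneg h0
      have hin : i < n := by omega
      refine ⟨(⟨(u : ℚ_[p]), by simpa [mem_sphere_zero_iff_norm] using hu⟩, ⟨i, hin⟩), ?_⟩
      show QuotientGroup.mk (Units.mk0 (u : ℚ_[p]) _ * π ^ (i : ℕ)) = QuotientGroup.mk x
      have humk : ∀ h, Units.mk0 ((u : ℚ_[p])) h = u := fun _ => Units.ext rfl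
      rw [humk, QuotientGroup.eq]
      have hval : (u * π ^ (i : ℕ))⁻¹ * x = π ^ (v - (i : ℤ)) := by
        rw [hu_def, ← zpow_natCast π i]
        group
      rw [hval]
      have hdiv : v - (i : ℤ) = (v / n) * n := by
        rw [hi', Int.emod_def]; ring
      exact ⟨π ^ (v / (n : ℤ)), by
        rw [powMonoidHom_apply, ← zpow_natCast (π ^ (v / (n : ℤ))), ← zpow_mul, ← hdiv]⟩
    have : CompactSpace (Metric.sphere (0 : ℚ_[p]) 1) :=
      isCompact_iff_compactSpace.mp (isCompact_sphere 0 1)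
    have hfin : Finite (ℚ_[p]ˣ ⧸ H) := by
      have hc : IsCompact (Set.range f) := isCompact_range hfc
      have hfin' : (Set.range f).Finite := hc.finite ⟨inferInstance⟩
      rw [Set.range_eq_univ.mpr hfsurj] at hfin'
      exact Set.finite_univ_iff.mp hfin'
    exact Subgroup.finiteIndex_of_finite_quotient (H := H)
end

section
/- Let g be a polynomial with coefficients in ℚ_p such that g(0) ≠ 0, and let n ≥ 1 be an integer. Then there exists δ > 0 such that for every c ∈ ℚ_p with ‖c‖ < δ, the value g(c) is nonzero and g(c)/g(0) is an n-th power in ℚ_p. (This is the key step in the proof of completeness of the types p_{0,C} in Lemma 2.1: for a polynomial f(X) = aᵢXⁱ + ⋯ + a_mX^m with lowest nonzero coefficient aᵢ, the coset of f(c) modulo n-th powers agrees with that of aᵢcⁱ for all c of sufficiently small nonzero norm.) -/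
open Polynomial in
lemma near_one_pow {p : ℕ} [Fact p.Prime] (n : ℕ) (hn : 1 ≤ n) (a : ℚ_[p])
    (ha : ‖a - 1‖ < ‖(n : ℚ_[p])‖ ^ 2) : ∃ y : ℚ_[p], a = y ^ n := by
  have hnle : ‖(n : ℚ_[p])‖ ≤ 1 := Padic.norm_int_le_one (n : ℤ) |>.trans_eq rfl
  have h1 : ‖a - 1‖ < 1 := ha.trans_le (by nlinarith [norm_nonneg ((n : ℚ_[p]))])
  have hale : ‖a‖ ≤ 1 := by
    have := Padic.nonarchimedean (a - 1) 1
    simp only [sub_add_cancel] at this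
    exact this.trans (by simp [h1.le])
  set a' : ℤ_[p] := ⟨a, hale⟩ with ha'
  set F : Polynomial ℤ_[p] := X ^ n - C a' with hF
  have hev1 : F.eval 1 = 1 - a' := by simp [hF]
  have hder : F.derivative.eval 1 = (n : ℤ_[p]) := by
    simp [hF, derivative_X_pow]
  have hnorm : ‖F.eval 1‖ < ‖F.derivative.eval 1‖ ^ 2 := by
    rw [hev1, hder]
    have : ‖(1 : ℤ_[p]) - a'‖ = ‖a - 1‖ := by
      rw [norm_sub_rev, PadicInt.norm_def]; push_cast; rfl
    rw [this]
    have : ‖(n : ℤ_[p])‖ = ‖(n : ℚ_[p])‖ := by rw [PadicInt.norm_def]; push_cast; rfl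
    rw [this]; exact ha
  obtain ⟨z, hz, -⟩ := hensels_lemma hnorm
  refine ⟨(z : ℚ_[p]), ?_⟩
  have : z ^ n - a' = 0 := by simpa [hF] using hz
  have : a' = z ^ n := by linear_combination -this
  have := congrArg (fun x : ℤ_[p] => (x : ℚ_[p])) this
  simpa using this

/-- Key step in completeness of the types `p_{0,C}`: if `g(0) ≠ 0` then for all `c` of
sufficiently small norm, `g(c) ≠ 0` and `g(c)/g(0)` is an `n`-th power. -/
theorem polynomial_eval_near_zero_same_coset (p : ℕ) [Fact p.Prime]
    (g : Polynomial ℚ_[p]) (hg : g.eval 0 ≠ 0) (n : ℕ) (hn : 1 ≤ n) :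
    ∃ δ : ℝ, 0 < δ ∧ ∀ c : ℚ_[p], ‖c‖ < δ →
      g.eval c ≠ 0 ∧ ∃ y : ℚ_[p], g.eval c / g.eval 0 = y ^ n := by
  have hn0 : ((n : ℚ_[p])) ≠ 0 := Nat.cast_ne_zero.mpr (by omega)
  set ε : ℝ := ‖(n : ℚ_[p])‖ ^ 2 * ‖g.eval 0‖ with hε
  have hgn : 0 < ‖g.eval 0‖ := norm_pos_iff.mpr hg
  have hnn : 0 < ‖(n : ℚ_[p])‖ := norm_pos_iff.mpr hn0
  have hεpos : 0 < ε := mul_pos (pow_pos hnn 2) hgn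
  have hcont : Continuous fun c : ℚ_[p] => g.eval c := g.continuous
  obtain ⟨δ, hδpos, hδ⟩ := Metric.continuous_iff.mp hcont 0 ε hεpos
  refine ⟨δ, hδpos, fun c hc => ?_⟩
  have hdist : ‖g.eval c - g.eval 0‖ < ε := by
    have := hδ c (by simpa [dist_eq_norm] using hc)
    simpa [dist_eq_norm] using this
  have key : ‖g.eval c / g.eval 0 - 1‖ < ‖(n : ℚ_[p])‖ ^ 2 := by
    have : g.eval c / g.eval 0 - 1 = (g.eval c - g.eval 0) / g.eval 0 := by
      field_simp
    rw [this, norm_div, div_lt_iff₀ hgn]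
    exact hdist
  have hnle : ‖(n : ℚ_[p])‖ ≤ 1 := Padic.norm_int_le_one (n : ℤ) |>.trans_eq rfl
  have hne : g.eval c ≠ 0 := by
    intro h
    rw [h] at key
    simp at key
    nlinarith [norm_nonneg ((n : ℚ_[p]))]
  exact ⟨hne, near_one_pow n hn _ key⟩
end

section
/- Let f(X) = a₀ + a₁X + ⋯ + a_mX^m be a polynomial with coefficients in ℚ_p whose leading coefficient a_m is nonzero, and let n ≥ 1 be an integer. Then there exists N > 0 such that for every c ∈ ℚ_p with ‖c‖ > N, the value f(c) is nonzero and f(c)/(a_m·c^m) is an n-th power in ℚ_p. (This is the key step in the proof of completeness of the types p_{∞,C} in Lemma 2.1: for c of sufficiently large norm, f(c) lies in the same coset of the n-th powers as a_m·c^m.) -/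
lemma nth_power_near_one (p : ℕ) [Fact p.Prime] (n : ℕ) (hn : 1 ≤ n) :
    ∃ ε : ℝ, 0 < ε ∧ ε ≤ 1 ∧ ∀ a : ℚ_[p], ‖a - 1‖ < ε → ∃ y : ℚ_[p], a = y ^ n := by
  have hn0 : ((n : ℚ_[p])) ≠ 0 := Nat.cast_ne_zero.2 (by omega)
  have hpos : 0 < ‖(n : ℚ_[p])‖ := norm_pos_iff.2 hn0
  refine ⟨min (‖(n : ℚ_[p])‖ ^ 2) 1, lt_min (pow_pos hpos 2) one_pos, min_le_right _ _, ?_⟩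
  intro a ha
  have ha1 : ‖a - 1‖ < 1 := lt_of_lt_of_le ha (min_le_right _ _)
  have hale : ‖a‖ ≤ 1 := by
    have h := Padic.nonarchimedean (a - 1) 1
    simp only [sub_add_cancel] at h
    exact h.trans (max_le ha1.le (by simp))
  set x : ℤ_[p] := ⟨a, hale⟩ with hx
  set F : Polynomial ℤ_[p] := Polynomial.X ^ n - Polynomial.C x with hF
  have h1norm : ‖(1 - x : ℤ_[p])‖ = ‖a - 1‖ := by
    rw [PadicInt.norm_def, ← norm_sub_rev]
    push_cast [hx]
    rfl
  have hnnorm : ‖(n : ℤ_[p])‖ = ‖(n : ℚ_[p])‖ := by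
    rw [PadicInt.norm_def, PadicInt.coe_natCast]
  have hnorm : ‖F.eval 1‖ < ‖F.derivative.eval 1‖ ^ 2 := by
    have heval : F.eval 1 = 1 - x := by simp [hF]
    have hderiv : F.derivative.eval 1 = n := by
      simp [hF, Polynomial.derivative_pow]
    rw [heval, hderiv, h1norm, hnnorm]
    exact lt_of_lt_of_le ha (min_le_left _ _)
  obtain ⟨z, hz, -⟩ := hensels_lemma hnorm
  refine ⟨(z : ℚ_[p]), ?_⟩
  have : z ^ n = x := by
    simpa [hF, sub_eq_zero] using hz
  have := congrArg (fun t : ℤ_[p] => (t : ℚ_[p])) this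
  simpa [PadicInt.coe_pow, hx] using this.symm

/-- Key step in completeness of the types `p_{∞,C}`: for a nonzero polynomial `f` with
leading coefficient `a_m` and degree `m`, for all `c` of sufficiently large norm, `f(c) ≠ 0`
and `f(c)/(a_m·c^m)` is an `n`-th power. -/
theorem polynomial_eval_at_infinity_same_coset (p : ℕ) [Fact p.Prime]
    (f : Polynomial ℚ_[p]) (hf : f ≠ 0) (n : ℕ) (hn : 1 ≤ n) :
    ∃ N : ℝ, 0 < N ∧ ∀ c : ℚ_[p], N < ‖c‖ →
      f.eval c ≠ 0 ∧
      ∃ y : ℚ_[p], f.eval c / (f.leadingCoeff * c ^ f.natDegree) = y ^ n := by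
  obtain ⟨ε, hε, hε1, hpow⟩ := nth_power_near_one p n hn
  set m := f.natDegree with hm
  set a := f.leadingCoeff with halc
  have ha : a ≠ 0 := Polynomial.leadingCoeff_ne_zero.2 hf
  have ha' : 0 < ‖a‖ := norm_pos_iff.2 ha
  set g := f.eraseLead with hg
  set M : ℝ := ∑ i ∈ Finset.range m, ‖g.coeff i‖ with hMdef
  have hM0 : 0 ≤ M := Finset.sum_nonneg fun i _ => norm_nonneg _
  refine ⟨max 1 (M / (‖a‖ * ε)) + 1, by positivity, ?_⟩
  intro c hc
  have hc1 : 1 < ‖c‖ := by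
    have := le_max_left 1 (M / (‖a‖ * ε)); linarith
  have hcM : M / (‖a‖ * ε) < ‖c‖ := by
    have := le_max_right 1 (M / (‖a‖ * ε)); linarith
  have hMlt : M < ‖c‖ * (‖a‖ * ε) := (div_lt_iff₀ (by positivity)).1 hcM
  have hc0 : c ≠ 0 := by
    intro h; rw [h] at hc1; simp at hc1; linarith
  have hden : a * c ^ m ≠ 0 := mul_ne_zero ha (pow_ne_zero _ hc0)
  have hsum : g.eval c = ∑ i ∈ Finset.range m, g.coeff i * c ^ i := by
    rcases Nat.eq_zero_or_pos m with hm0 | hm0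
    · have : f = Polynomial.C (f.coeff 0) := Polynomial.eq_C_of_natDegree_eq_zero hm0
      rw [hg, hm0]
      rw [this, Polynomial.eraseLead_C]
      simp
    · exact Polynomial.eval_eq_sum_range'
        (lt_of_le_of_lt (Polynomial.eraseLead_natDegree_le f) (by omega)) c
  have key : ‖g.eval c‖ * ‖c‖ ≤ M * ‖c‖ ^ m := by
    rw [hsum]
    calc ‖∑ i ∈ Finset.range m, g.coeff i * c ^ i‖ * ‖c‖
        ≤ (∑ i ∈ Finset.range m, ‖g.coeff i * c ^ i‖) * ‖c‖ := by
          apply mul_le_mul_of_nonneg_right (norm_sum_le _ _) (norm_nonneg c)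
      _ = ∑ i ∈ Finset.range m, ‖g.coeff i‖ * ‖c‖ ^ i * ‖c‖ := by
          rw [Finset.sum_mul]; congr 1; ext i; rw [norm_mul, norm_pow]
      _ ≤ ∑ i ∈ Finset.range m, ‖g.coeff i‖ * ‖c‖ ^ m := by
          apply Finset.sum_le_sum
          intro i hi
          have hi' : i + 1 ≤ m := Finset.mem_range.1 hi
          have : ‖c‖ ^ (i + 1) ≤ ‖c‖ ^ m := pow_le_pow_right₀ hc1.le hi'
          rw [mul_assoc, ← pow_succ]
          exact mul_le_mul_of_nonneg_left this (norm_nonneg _)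
      _ = M * ‖c‖ ^ m := by rw [← Finset.sum_mul]
  have hg' : ‖g.eval c‖ < ε * (‖a‖ * ‖c‖ ^ m) := by
    have hcp : (0:ℝ) < ‖c‖ := by linarith
    have hpm : (0:ℝ) < ‖c‖ ^ m := pow_pos hcp m
    have h2 : M * ‖c‖ ^ m < (‖c‖ * (‖a‖ * ε)) * ‖c‖ ^ m :=
      mul_lt_mul_of_pos_right hMlt hpm
    have h3 : ‖g.eval c‖ * ‖c‖ < (ε * (‖a‖ * ‖c‖ ^ m)) * ‖c‖ := by nlinarith
    exact lt_of_mul_lt_mul_right h3 (norm_nonneg c)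
  have hfe : f.eval c = g.eval c + a * c ^ m := by
    conv_lhs => rw [← Polynomial.eraseLead_add_C_mul_X_pow f]
    rw [Polynomial.eval_add, Polynomial.eval_mul, Polynomial.eval_C, Polynomial.eval_pow,
      Polynomial.eval_X]
  have hq : f.eval c / (a * c ^ m) - 1 = g.eval c / (a * c ^ m) := by
    rw [hfe]; field_simp; ring
  have hqnorm : ‖f.eval c / (a * c ^ m) - 1‖ < ε := by
    rw [hq, norm_div, norm_mul, norm_pow]
    rw [div_lt_iff₀ (by positivity)]
    calc ‖g.eval c‖ < ε * (‖a‖ * ‖c‖ ^ m) := hg'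
      _ = ε * (‖a‖ * ‖c‖ ^ m) := rfl
  constructor
  · intro h0
    rw [h0, zero_div] at hqnorm
    simp at hqnorm
    linarith
  · exact hpow _ hqnorm
end

section
/- (Iwasawa decomposition of SL(2,ℚ_p).) Every matrix A ∈ SL(2,ℚ_p) can be written as A = H·T where H ∈ SL(2,ℚ_p) is upper triangular (its lower-left entry is 0) and T ∈ SL(2,ℤ_p); likewise A can be written as A = T'·H' with T' ∈ SL(2,ℤ_p) and H' ∈ SL(2,ℚ_p) upper triangular. That is, SL(2,ℚ_p) = B(ℚ_p)·SL(2,ℤ_p) = SL(2,ℤ_p)·B(ℚ_p). -/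
open Matrix

lemma iwasawa_aux (p : ℕ) [Fact p.Prime]
    (A : Matrix.SpecialLinearGroup (Fin 2) ℚ_[p]) :
    ∃ H T : Matrix.SpecialLinearGroup (Fin 2) ℚ_[p],
      (H : Matrix (Fin 2) (Fin 2) ℚ_[p]) 1 0 = 0 ∧
      (∀ i j, ‖(T : Matrix (Fin 2) (Fin 2) ℚ_[p]) i j‖ ≤ 1) ∧
      A = H * T := by
  set a := (A : Matrix (Fin 2) (Fin 2) ℚ_[p]) 0 0 with ha
  set b := (A : Matrix (Fin 2) (Fin 2) ℚ_[p]) 0 1 with hb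
  set c := (A : Matrix (Fin 2) (Fin 2) ℚ_[p]) 1 0 with hc
  set d := (A : Matrix (Fin 2) (Fin 2) ℚ_[p]) 1 1 with hd
  have hdet : a * d - b * c = 1 := by
    have := A.property
    rw [Matrix.det_fin_two] at this
    exact this
  by_cases hle : ‖c‖ ≤ ‖d‖
  · have hd0 : d ≠ 0 := by
      intro h
      rw [h, norm_zero] at hle
      have : c = 0 := by
        have : ‖c‖ = 0 := le_antisymm hle (norm_nonneg _)
        simpa using this
      rw [h, this] at hdet; simp at hdet
    refine ⟨⟨!![a - b * c / d, b; 0, d], ?_⟩, ⟨!![1, 0; c / d, 1], ?_⟩, ?_, ?_, ?_⟩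
    · rw [Matrix.det_fin_two_of]; field_simp; linear_combination hdet
    · rw [Matrix.det_fin_two_of]; ring
    · simp
    · intro i j
      fin_cases i <;> fin_cases j <;> simp
      exact div_le_one_of_le₀ hle (norm_nonneg _)
    · ext i j
      erw [Matrix.SpecialLinearGroup.coe_mul]
      fin_cases i <;> fin_cases j <;>
        simp [Matrix.SpecialLinearGroup.coe_mul, Matrix.mul_apply, Fin.sum_univ_two,
          ← ha, ← hb, ← hc, ← hd] <;> field_simp <;> ring
  · have hc0 : c ≠ 0 := by
      intro h
      rw [h, norm_zero] at hle
      exact hle (norm_nonneg _)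
    have hle' : ‖d‖ ≤ ‖c‖ := le_of_not_ge hle
    refine ⟨⟨!![a * d / c - b, a; 0, c], ?_⟩, ⟨!![0, -1; 1, d / c], ?_⟩, ?_, ?_, ?_⟩
    · rw [Matrix.det_fin_two_of]; field_simp; linear_combination hdet
    · rw [Matrix.det_fin_two_of]; ring
    · simp
    · intro i j
      fin_cases i <;> fin_cases j <;> simp
      exact div_le_one_of_le₀ hle' (norm_nonneg _)
    · ext i j
      erw [Matrix.SpecialLinearGroup.coe_mul]
      fin_cases i <;> fin_cases j <;>
        simp [Matrix.SpecialLinearGroup.coe_mul, Matrix.mul_apply, Fin.sum_univ_two,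
          ← ha, ← hb, ← hc, ← hd] <;> field_simp <;> ring

/-- Iwasawa decomposition of `SL(2,ℚ_p)`: every `A ∈ SL(2,ℚ_p)` factors as `A = H·T` with
`H` upper triangular and `T ∈ SL(2,ℤ_p)`, and also as `A = T'·H'` with `T' ∈ SL(2,ℤ_p)` and
`H'` upper triangular. -/
theorem iwasawa_decomposition_SL2_Qp (p : ℕ) [Fact p.Prime]
    (A : Matrix.SpecialLinearGroup (Fin 2) ℚ_[p]) :
    (∃ H T : Matrix.SpecialLinearGroup (Fin 2) ℚ_[p],
      (H : Matrix (Fin 2) (Fin 2) ℚ_[p]) 1 0 = 0 ∧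
      (∀ i j, ‖(T : Matrix (Fin 2) (Fin 2) ℚ_[p]) i j‖ ≤ 1) ∧
      A = H * T) ∧
    (∃ T' H' : Matrix.SpecialLinearGroup (Fin 2) ℚ_[p],
      (∀ i j, ‖(T' : Matrix (Fin 2) (Fin 2) ℚ_[p]) i j‖ ≤ 1) ∧
      (H' : Matrix (Fin 2) (Fin 2) ℚ_[p]) 1 0 = 0 ∧
      A = T' * H') := by
  refine ⟨iwasawa_aux p A, ?_⟩
  obtain ⟨H, T, h1, h2, h3⟩ := iwasawa_aux p A⁻¹
  refine ⟨T⁻¹, H⁻¹, ?_, ?_, ?_⟩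
  · intro i j
    rw [Matrix.SpecialLinearGroup.coe_inv, Matrix.adjugate_fin_two]
    fin_cases i <;> fin_cases j <;> simpa using h2 _ _
  · rw [Matrix.SpecialLinearGroup.coe_inv, Matrix.adjugate_fin_two]
    simpa using h1
  · have : A⁻¹ = H * T := h3
    calc A = (A⁻¹)⁻¹ := by simp
    _ = (H * T)⁻¹ := by rw [this]
    _ = T⁻¹ * H⁻¹ := mul_inv_rev H T
end

section
/- (Lemma 3.5, matrix factorization with norm estimate.) Let u = [[u₁,u₂],[u₃,u₄]] ∈ SL(2,ℤ_p) with u₃ ≠ 0, let a ∈ ℚ_p with a ≠ 0, and let c ∈ ℚ_p satisfy ‖c·u₃‖ > ‖a·u₁‖. Set D = a·u₁ + c·u₃ and e = a⁻¹·u₃/D. Then D ≠ 0, the factorization [[a,c],[0,a⁻¹]]·u = [[1,0],[e,1]]·[[D, a·u₂ + c·u₄],[0,D⁻¹]] holds in SL(2,ℚ_p), and ‖e‖ = 1/(‖a‖·‖c‖). -/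
/-- Lemma 3.5, matrix factorization with norm estimate: for `u ∈ SL(2,ℤ_p)` with `u₃ ≠ 0`,
`a ≠ 0` and `‖c·u₃‖ > ‖a·u₁‖`, with `D = a·u₁ + c·u₃` and `e = a⁻¹·u₃/D` one has `D ≠ 0`,
`[[a,c],[0,a⁻¹]]·u = [[1,0],[e,1]]·[[D, a·u₂+c·u₄],[0,D⁻¹]]` and `‖e‖ = 1/(‖a‖·‖c‖)`. -/
theorem borel_times_SL2Zp_factorization (p : ℕ) [Fact p.Prime]
    (u₁ u₂ u₃ u₄ a c : ℚ_[p])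
    (hdet : u₁ * u₄ - u₂ * u₃ = 1)
    (hu₁ : ‖u₁‖ ≤ 1) (hu₂ : ‖u₂‖ ≤ 1) (hu₃ : ‖u₃‖ ≤ 1) (hu₄ : ‖u₄‖ ≤ 1)
    (hu₃ne : u₃ ≠ 0) (ha : a ≠ 0) (hnorm : ‖a * u₁‖ < ‖c * u₃‖) :
    a * u₁ + c * u₃ ≠ 0 ∧
    (!![a, c; 0, a⁻¹] * !![u₁, u₂; u₃, u₄] : Matrix (Fin 2) (Fin 2) ℚ_[p]) =
      !![1, 0; a⁻¹ * u₃ / (a * u₁ + c * u₃), 1] *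
        !![a * u₁ + c * u₃, a * u₂ + c * u₄; 0, (a * u₁ + c * u₃)⁻¹] ∧
    ‖a⁻¹ * u₃ / (a * u₁ + c * u₃)‖ = 1 / (‖a‖ * ‖c‖) := by
  have hc : c ≠ 0 := by
    rintro rfl; simp at hnorm
    exact absurd hnorm (not_lt.2 (by positivity))
  have hDnorm : ‖a * u₁ + c * u₃‖ = ‖c * u₃‖ := by
    rw [Padic.add_eq_max_of_ne hnorm.ne, max_eq_right hnorm.le]
  have hD : a * u₁ + c * u₃ ≠ 0 := by
    intro h
    rw [h, norm_zero] at hDnorm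
    exact mul_ne_zero hc hu₃ne (by simpa [eq_comm] using hDnorm)
  have hu3n : ‖u₃‖ ≠ 0 := norm_ne_zero_iff.2 hu₃ne
  refine ⟨hD, ?_, ?_⟩
  · ext i j
    have hD' : a * u₁ + u₃ * c ≠ 0 := by rwa [mul_comm u₃]
    fin_cases i <;> fin_cases j <;>
      simp [Matrix.mul_apply, Fin.sum_univ_two, div_eq_mul_inv] <;>
      field_simp <;> ring_nf <;>
      linear_combination a * hdet
  · rw [norm_div, norm_mul, norm_inv, hDnorm, norm_mul]
    have han : ‖a‖ ≠ 0 := norm_ne_zero_iff.2 ha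
    have hcn : ‖c‖ ≠ 0 := norm_ne_zero_iff.2 hc
    field_simp
end
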